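/- arXiv:0811.1759 — 4 statements merged into one kernel-verified Lean document; each statement's English description precedes it below -/
import Mathlib

section
/- Let (X, ρ) be a metric space with a distinguished family of lines such that through every two points there is exactly one distinguished line, and suppose the midpoint convexity condition ρ((1/2)x⊕(1/2)y, (1/2)x⊕(1/2)z) ≤ (1/2)ρ(y,z) holds for all x,y,z. Then for all t ∈ [0,1] and all x,y,w,z, ρ((1-t)x⊕ty, (1-t)w⊕tz) ≤ (1-t)ρ(x,w) + tρ(y,z). -/
/-- A metric space with a distinguished family of (geodesic) lines, encoded by the
convex-combination map `comb t x y = (1-t)x ⊕ ty` along the unique distinguished line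
through `x` and `y`.  `dist_left`/`dist_right` say that `comb t x y` divides the segment
`[x,y]` in ratio `t : (1-t)`, and `uniq` encodes the uniqueness of the distinguished line
through a given pair of points (any point dividing `[x,y]` in the same ratio coincides
with `comb t x y`). -/
structure GeodesicStruct (X : Type*) [MetricSpace X] where
  comb : ℝ → X → X → X
  comb_zero : ∀ x y, comb 0 x y = x
  comb_one : ∀ x y, comb 1 x y = y
  dist_left : ∀ t ∈ Set.Icc (0:ℝ) 1, ∀ x y, dist (comb t x y) x = t * dist x y
  dist_right : ∀ t ∈ Set.Icc (0:ℝ) 1, ∀ x y, dist (comb t x y) y = (1 - t) * dist x y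
  uniq : ∀ t ∈ Set.Icc (0:ℝ) 1, ∀ x y z,
    dist z x = t * dist x y → dist z y = (1 - t) * dist x y → z = comb t x y

section Aux

variable {X : Type*} [MetricSpace X] (G : GeodesicStruct X)

/-- Symmetry: `comb t x y = comb (1-t) y x`. -/
lemma comb_symm {t : ℝ} (ht : t ∈ Set.Icc (0:ℝ) 1) (x y : X) :
    G.comb t x y = G.comb (1 - t) y x := by
  obtain ⟨ht0, ht1⟩ := ht
  refine G.uniq (1 - t) ⟨by linarith, by linarith⟩ y x _ ?_ ?_
  · rw [G.dist_right t ⟨ht0, ht1⟩ x y, dist_comm x y]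
  · rw [G.dist_left t ⟨ht0, ht1⟩ x y, dist_comm x y]; ring_nf

/-- Distance between two points on a common distinguished segment. -/
lemma dist_comb_comb {s t : ℝ} (hs : s ∈ Set.Icc (0:ℝ) 1) (ht : t ∈ Set.Icc (0:ℝ) 1)
    (hst : s ≤ t) (x y : X) :
    dist (G.comb s x y) (G.comb t x y) = (t - s) * dist x y := by
  obtain ⟨hs0, hs1⟩ := hs
  obtain ⟨ht0, ht1⟩ := ht
  rcases eq_or_lt_of_le ht0 with h0 | h0
  · have hseq : s = 0 := le_antisymm (hst.trans h0.symm.le) hs0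
    rw [hseq, ← h0, dist_self]; ring
  · set m := G.comb t x y with hm
    have hxm : dist x m = t * dist x y := by
      rw [dist_comm]; exact G.dist_left t ⟨ht0, ht1⟩ x y
    have hmy : dist m y = (1 - t) * dist x y := G.dist_right t ⟨ht0, ht1⟩ x y
    have hu : s / t ∈ Set.Icc (0:ℝ) 1 :=
      ⟨div_nonneg hs0 ht0, (div_le_one h0).mpr hst⟩
    set p := G.comb (s / t) x m with hp
    have hpx : dist p x = s * dist x y := by
      rw [G.dist_left (s/t) hu x m, hxm]; field_simp
    have hpm : dist p m = (t - s) * dist x y := by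
      rw [G.dist_right (s/t) hu x m, hxm]; field_simp
    have hd : dist x y ≤ dist x p + dist p y := dist_triangle x p y
    have hd2 : dist p y ≤ dist p m + dist m y := dist_triangle p m y
    have hpy : dist p y = (1 - s) * dist x y := by
      rw [dist_comm x p] at hd
      nlinarith [dist_nonneg (x := x) (y := y)]
    have : p = G.comb s x y := G.uniq s ⟨hs0, hs1⟩ x y p hpx hpy
    rw [← this, hpm]

/-- Midpoint of two points on a distinguished segment. -/
lemma comb_mid {a b : ℝ} (ha : a ∈ Set.Icc (0:ℝ) 1) (hb : b ∈ Set.Icc (0:ℝ) 1)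
    (hab : a ≤ b) (x y : X) :
    G.comb (1/2) (G.comb a x y) (G.comb b x y) = G.comb ((a + b)/2) x y := by
  obtain ⟨ha0, ha1⟩ := ha
  obtain ⟨hb0, hb1⟩ := hb
  have h2 : (1/2 : ℝ) ∈ Set.Icc (0:ℝ) 1 := by norm_num
  set pa := G.comb a x y
  set pb := G.comb b x y
  set m := G.comb (1/2) pa pb with hm
  have hpapb : dist pa pb = (b - a) * dist x y :=
    dist_comb_comb G ⟨ha0, ha1⟩ ⟨hb0, hb1⟩ hab x y
  have hma : dist m pa = (1/2) * ((b - a) * dist x y) := by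
    rw [G.dist_left (1/2) h2 pa pb, hpapb]
  have hmb : dist m pb = (1/2) * ((b - a) * dist x y) := by
    rw [G.dist_right (1/2) h2 pa pb, hpapb]; ring
  have hpax : dist pa x = a * dist x y := G.dist_left a ⟨ha0, ha1⟩ x y
  have hpby : dist pb y = (1 - b) * dist x y := G.dist_right b ⟨hb0, hb1⟩ x y
  have hmx_le : dist m x ≤ dist m pa + dist pa x := dist_triangle m pa x
  have hmy_le : dist m y ≤ dist m pb + dist pb y := dist_triangle m pb y
  have hxy : dist x y ≤ dist x m + dist m y := dist_triangle x m y
  rw [dist_comm x m] at hxy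
  have hmx : dist m x = ((a + b)/2) * dist x y := by
    nlinarith [dist_nonneg (x := x) (y := y)]
  have hmy : dist m y = (1 - (a + b)/2) * dist x y := by
    nlinarith [dist_nonneg (x := x) (y := y)]
  exact G.uniq ((a+b)/2) ⟨by linarith, by linarith⟩ x y m hmx hmy

end Aux

/-- If the midpoint convexity condition
ρ((1/2)x⊕(1/2)y, (1/2)x⊕(1/2)z) ≤ (1/2)ρ(y,z) holds, then the full convexity condition
ρ((1-t)x⊕ty, (1-t)w⊕tz) ≤ (1-t)ρ(x,w) + tρ(y,z) holds for all t ∈ [0,1]. -/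
theorem convexity_from_midpoint_convexity {X : Type*} [MetricSpace X] (G : GeodesicStruct X)
    (hmid : ∀ x y z : X,
      dist (G.comb (1/2) x y) (G.comb (1/2) x z) ≤ (1/2) * dist y z) :
    ∀ t ∈ Set.Icc (0:ℝ) 1, ∀ x y w z : X,
      dist (G.comb t x y) (G.comb t w z) ≤ (1 - t) * dist x w + t * dist y z := by
  have h2 : (1/2 : ℝ) ∈ Set.Icc (0:ℝ) 1 := by norm_num
  -- four-point midpoint convexity
  have hmid4 : ∀ p q p' q' : X,
      dist (G.comb (1/2) p q) (G.comb (1/2) p' q')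
        ≤ (1/2) * dist p p' + (1/2) * dist q q' := by
    intro p q p' q'
    have t1 : dist (G.comb (1/2) p q) (G.comb (1/2) p q') ≤ (1/2) * dist q q' :=
      hmid p q q'
    have e1 : G.comb (1/2) p q' = G.comb (1/2) q' p := by
      have := comb_symm G h2 p q'; rw [this]; norm_num
    have e2 : G.comb (1/2) p' q' = G.comb (1/2) q' p' := by
      have := comb_symm G h2 p' q'; rw [this]; norm_num
    have t2 : dist (G.comb (1/2) p q') (G.comb (1/2) p' q') ≤ (1/2) * dist p p' := by
      rw [e1, e2]; exact hmid q' p p'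
    calc dist (G.comb (1/2) p q) (G.comb (1/2) p' q')
        ≤ dist (G.comb (1/2) p q) (G.comb (1/2) p q')
          + dist (G.comb (1/2) p q') (G.comb (1/2) p' q') := dist_triangle _ _ _
      _ ≤ (1/2) * dist p p' + (1/2) * dist q q' := by linarith
  intro t ht x y w z
  obtain ⟨ht0, ht1⟩ := ht
  set A := dist x w with hA
  set B := dist y z with hB
  set g : ℝ → ℝ := fun s => dist (G.comb s x y) (G.comb s w z) with hg
  -- dyadic case
  have hdy : ∀ n : ℕ, ∀ k : ℕ, k ≤ 2^n →
      g ((k : ℝ) / 2^n) ≤ (1 - (k:ℝ)/2^n) * A + ((k:ℝ)/2^n) * B := by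
    intro n
    induction n with
    | zero =>
      intro k hk
      interval_cases k
      · simp [hg, G.comb_zero, hA]
      · simp [hg, G.comb_one, dist_comm, hB]
    | succ n ih =>
      intro k hk
      set i := k / 2 with hi
      set j := k - i with hj
      have hij : i + j = k := by omega
      have hi2 : i ≤ 2^n := by
        have : (2:ℕ)^(n+1) = 2 * 2^n := by ring
        omega
      have hj2 : j ≤ 2^n := by
        have : (2:ℕ)^(n+1) = 2 * 2^n := by ring
        omega
      have hile : i ≤ j := by omega
      set a : ℝ := (i:ℝ) / 2^n with ha
      set b : ℝ := (j:ℝ) / 2^n with hb'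
      have haI : a ∈ Set.Icc (0:ℝ) 1 := by
        constructor
        · positivity
        · rw [ha, div_le_one (by positivity)]
          exact_mod_cast hi2
      have hbI : b ∈ Set.Icc (0:ℝ) 1 := by
        constructor
        · positivity
        · rw [hb', div_le_one (by positivity)]
          exact_mod_cast hj2
      have hab : a ≤ b := by
        apply div_le_div_of_nonneg_right ?_ (by positivity)
        · exact_mod_cast hile
      have hkab : (k : ℝ) / 2^(n+1) = (a + b) / 2 := by
        rw [ha, hb']
        have : ((i:ℝ) + (j:ℝ)) = (k:ℝ) := by exact_mod_cast congrArg (Nat.cast (R := ℝ)) hij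
        field_simp
        rw [← this]; ring
      have hcomb : G.comb ((a+b)/2) x y
          = G.comb (1/2) (G.comb a x y) (G.comb b x y) :=
        (comb_mid G haI hbI hab x y).symm
      have hcomb' : G.comb ((a+b)/2) w z
          = G.comb (1/2) (G.comb a w z) (G.comb b w z) :=
        (comb_mid G haI hbI hab w z).symm
      have h4 := hmid4 (G.comb a x y) (G.comb b x y) (G.comb a w z) (G.comb b w z)
      have hga := ih i hi2
      have hgb := ih j hj2
      rw [hkab]
      simp only [hg] at hga hgb ⊢
      simp only [← ha, ← hb'] at hga hgb
      rw [hcomb, hcomb']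
      linarith
  -- density argument
  have key : ∀ ε > (0:ℝ), g t ≤ (1 - t) * A + t * B + ε := by
    intro ε hε
    set C : ℝ := dist x y + dist w z + A + B with hC
    have hC0 : 0 ≤ C := by positivity
    obtain ⟨n, hn⟩ : ∃ n : ℕ, ((1:ℝ)/2)^n < ε / (C + 1) :=
      exists_pow_lt_of_lt_one (by positivity) (by norm_num)
    have hCn : C * ((1:ℝ)/2)^n < ε := by
      have h1 : C * ((1:ℝ)/2)^n ≤ (C + 1) * ((1:ℝ)/2)^n := by
        apply mul_le_mul_of_nonneg_right (by linarith) (by positivity)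
      have h2 : (C + 1) * ((1:ℝ)/2)^n < (C + 1) * (ε / (C + 1)) := by
        apply mul_lt_mul_of_pos_left hn (by linarith)
      have h3 : (C + 1) * (ε / (C + 1)) = ε := by field_simp
      linarith
    set k : ℕ := ⌊t * 2^n⌋₊ with hk
    have hk2 : k ≤ 2^n := by
      have : t * 2^n ≤ 2^n := by nlinarith [pow_pos (by norm_num : (0:ℝ) < 2) n]
      have h' : t * 2^n ≤ ((2^n : ℕ) : ℝ) := by push_cast; exact this
      exact Nat.floor_le_of_le h'
    set s : ℝ := (k:ℝ) / 2^n with hs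
    have hsI : s ∈ Set.Icc (0:ℝ) 1 := by
      constructor
      · positivity
      · rw [hs, div_le_one (by positivity)]; exact_mod_cast hk2
    have hst : s ≤ t := by
      rw [hs, div_le_iff₀ (by positivity)]
      exact Nat.floor_le (by positivity)
    have hts : t - s ≤ ((1:ℝ)/2)^n := by
      have h1 : t * 2^n < (k:ℝ) + 1 := Nat.lt_floor_add_one _
      have h2 : (0:ℝ) < 2^n := by positivity
      rw [hs, div_pow, one_pow, sub_le_iff_le_add, ← add_div, le_div_iff₀ h2]
      nlinarith
    have hgs := hdy n k hk2
    have hlip1 : dist (G.comb s x y) (G.comb t x y) = (t - s) * dist x y :=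
      dist_comb_comb G hsI ⟨ht0, ht1⟩ hst x y
    have hlip2 : dist (G.comb s w z) (G.comb t w z) = (t - s) * dist w z :=
      dist_comb_comb G hsI ⟨ht0, ht1⟩ hst w z
    have htri : g t ≤ g s + (t - s) * dist x y + (t - s) * dist w z := by
      simp only [hg]
      calc dist (G.comb t x y) (G.comb t w z)
          ≤ dist (G.comb t x y) (G.comb s x y) + dist (G.comb s x y) (G.comb s w z)
            + dist (G.comb s w z) (G.comb t w z) := dist_triangle4 _ _ _ _
        _ = dist (G.comb s x y) (G.comb s w z) + (t - s) * dist x y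
            + (t - s) * dist w z := by rw [dist_comm (G.comb t x y), hlip1, hlip2]; ring
    have hAB : (1 - s) * A + s * B ≤ (1 - t) * A + t * B + (t - s) * (A + B) := by
      have hA0 : 0 ≤ A := dist_nonneg
      have hB0 : 0 ≤ B := dist_nonneg
      nlinarith
    have hfin : (t - s) * C ≤ ((1:ℝ)/2)^n * C :=
      mul_le_mul_of_nonneg_right hts hC0
    rw [← hs] at hgs
    simp only [hC] at hfin
    nlinarith [dist_nonneg (x := x) (y := y), dist_nonneg (x := w) (y := z)]
  have := le_of_forall_pos_le_add key
  simpa [hg] using this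
end

section
/- For A ∈ B and vectors V ∈ L(K,H), the Fréchet derivative of the Möbius transformation M_B at a point A is given by D M_B(A)V = (1-BB*)^{1/2}(1+AB*)^{-1} V (1+B*A)^{-1}(1-B*B)^{1/2}. In particular, D M_B(0)V = (1-BB*)^{1/2} V (1-B*B)^{1/2}. -/
open ContinuousLinearMap

variable {K H : Type*}
  [NormedAddCommGroup H] [InnerProductSpace ℂ H] [CompleteSpace H]
  [NormedAddCommGroup K] [InnerProductSpace ℂ K] [CompleteSpace K]

/-- The square root of a (positive) operator, via continuous functional calculus. -/
noncomputable def opSqrt {E : Type*} [NormedAddCommGroup E] [InnerProductSpace ℂ E]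
    [CompleteSpace E] (T : E →L[ℂ] E) : E →L[ℂ] E := cfc Real.sqrt T

/-- The inverse square root of a (positive invertible) operator. -/
noncomputable def opInvSqrt {E : Type*} [NormedAddCommGroup E] [InnerProductSpace ℂ E]
    [CompleteSpace E] (T : E →L[ℂ] E) : E →L[ℂ] E := cfc (fun x : ℝ => (Real.sqrt x)⁻¹) T

/-- The Möbius transformation M_A(X) = (1-AA*)^{-1/2}(A+X)(1+A*X)^{-1}(1-A*A)^{1/2}. -/
noncomputable def mobius (A X : K →L[ℂ] H) : K →L[ℂ] H :=
  opInvSqrt (1 - A ∘L adjoint A) ∘L (A + X) ∘L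
    Ring.inverse (1 + adjoint A ∘L X) ∘L opSqrt (1 - adjoint A ∘L A)

/-- (1-BB*)^{-1/2} (1-BB*) = (1-BB*)^{1/2} for ‖B‖ < 1. -/
lemma opInvSqrt_comp_self (B : K →L[ℂ] H) (hB : ‖B‖ < 1) :
    opInvSqrt (1 - B ∘L adjoint B) ∘L (1 - B ∘L adjoint B) = opSqrt (1 - B ∘L adjoint B) := by
  set T : H →L[ℂ] H := 1 - B ∘L adjoint B with hT
  have hsaBB : IsSelfAdjoint (B ∘L adjoint B) := by
    rw [IsSelfAdjoint, star_eq_adjoint, adjoint_comp, adjoint_adjoint]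
  have hsa : IsSelfAdjoint T := (IsSelfAdjoint.one (H →L[ℂ] H)).sub hsaBB
  have hspec : ∀ x ∈ spectrum ℝ T, 0 < x := by
    intro x hx
    have h1 : T = algebraMap ℝ (H →L[ℂ] H) 1 - B ∘L adjoint B := by simp [hT]
    rw [h1, ← spectrum.singleton_sub_eq] at hx
    obtain ⟨a, ha, b, hb, hab⟩ := hx
    simp only [Set.mem_singleton_iff] at ha
    have hbn : ‖b‖ ≤ ‖B ∘L adjoint B‖ * ‖(1 : H →L[ℂ] H)‖ := spectrum.norm_le_norm_mul_of_mem hb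
    have hone : ‖(1 : H →L[ℂ] H)‖ ≤ 1 := norm_id_le
    have hbn' : ‖b‖ ≤ ‖B ∘L adjoint B‖ := by
      calc ‖b‖ ≤ ‖B ∘L adjoint B‖ * ‖(1 : H →L[ℂ] H)‖ := hbn
        _ ≤ ‖B ∘L adjoint B‖ * 1 := by
            exact mul_le_mul_of_nonneg_left hone (norm_nonneg _)
        _ = ‖B ∘L adjoint B‖ := mul_one _
    have : ‖B ∘L adjoint B‖ < 1 := by
      calc ‖B ∘L adjoint B‖ ≤ ‖B‖ * ‖adjoint B‖ := opNorm_comp_le _ _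
        _ = ‖B‖ * ‖B‖ := by rw [LinearIsometryEquiv.norm_map ContinuousLinearMap.adjoint B]
        _ < 1 := by nlinarith [norm_nonneg B]
    have hb1 : b < 1 := lt_of_le_of_lt (le_trans (le_abs_self b) hbn') this
    subst ha
    simp only at hab
    linarith [hab ▸ (by linarith : (0:ℝ) < 1 - b)]
  have hcont : ContinuousOn (fun x : ℝ => (Real.sqrt x)⁻¹) (spectrum ℝ T) :=
    ContinuousOn.inv₀ Real.continuous_sqrt.continuousOn
      (fun x hx => Real.sqrt_ne_zero'.mpr (hspec x hx))
  calc opInvSqrt T ∘L T = cfc (fun x : ℝ => (Real.sqrt x)⁻¹) T * cfc (fun x : ℝ => x) T := by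
        rw [cfc_id' ℝ T]; rfl
    _ = cfc (fun x : ℝ => (Real.sqrt x)⁻¹ * x) T := by
        exact (cfc_mul _ _ T hcont continuous_id.continuousOn).symm
    _ = opSqrt T := by
        rw [opSqrt]; apply cfc_congr
        intro x hx
        have hx0 := hspec x hx
        show (Real.sqrt x)⁻¹ * x = Real.sqrt x
        rw [inv_mul_eq_div, Real.div_sqrt]

set_option maxHeartbeats 1000000 in
/-- The main computation: derivative of `mobius B` at any `A` with `‖A‖ < 1`. -/
lemma mobius_deriv_aux (B A : K →L[ℂ] H) (hB : ‖B‖ < 1) (hA : ‖A‖ < 1) :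
    ∃ D : (K →L[ℂ] H) →L[ℂ] (K →L[ℂ] H), HasFDerivAt (mobius B) D A ∧
      ∀ V : K →L[ℂ] H, D V =
        opSqrt (1 - B ∘L adjoint B) ∘L Ring.inverse (1 + A ∘L adjoint B) ∘L V ∘L
          Ring.inverse (1 + adjoint B ∘L A) ∘L opSqrt (1 - adjoint B ∘L B) := by
  set C := opInvSqrt (1 - B ∘L adjoint B) with hC
  set S := opSqrt (1 - adjoint B ∘L B) with hS
  set S' := opSqrt (1 - B ∘L adjoint B) with hS'
  have hadj : ‖adjoint B‖ = ‖B‖ := LinearIsometryEquiv.norm_map ContinuousLinearMap.adjoint B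
  have hBA : ‖-(adjoint B ∘L A)‖ < 1 := by
    rw [norm_neg]
    calc ‖adjoint B ∘L A‖ ≤ ‖adjoint B‖ * ‖A‖ := opNorm_comp_le _ _
      _ < 1 := by rw [hadj]; nlinarith [norm_nonneg B, norm_nonneg A]
  have hAB : ‖-(A ∘L adjoint B)‖ < 1 := by
    rw [norm_neg]
    calc ‖A ∘L adjoint B‖ ≤ ‖A‖ * ‖adjoint B‖ := opNorm_comp_le _ _
      _ < 1 := by rw [hadj]; nlinarith [norm_nonneg B, norm_nonneg A]
  set u : (K →L[ℂ] K)ˣ := Units.oneSub _ hBA with hu_def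
  set u' : (H →L[ℂ] H)ˣ := Units.oneSub _ hAB with hu'_def
  have hu : (u : K →L[ℂ] K) = 1 + adjoint B ∘L A := by
    simp [hu_def, Units.val_oneSub, sub_neg_eq_add]
  have hu' : (u' : H →L[ℂ] H) = 1 + A ∘L adjoint B := by
    simp [hu'_def, Units.val_oneSub, sub_neg_eq_add]
  -- Ring.inverse values
  have hri : Ring.inverse ((1 : K →L[ℂ] K) + adjoint B ∘L A) = (↑u⁻¹ : K →L[ℂ] K) := by
    rw [← hu, Ring.inverse_unit]
  have hri' : Ring.inverse ((1 : H →L[ℂ] H) + A ∘L adjoint B) = (↑u'⁻¹ : H →L[ℂ] H) := by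
    rw [← hu', Ring.inverse_unit]
  -- unit cancellation facts, as compositions
  have hiu : (↑u⁻¹ : K →L[ℂ] K) ∘L (↑u : K →L[ℂ] K) = 1 := u.inv_mul
  have hui' : (↑u' : H →L[ℂ] H) ∘L (↑u'⁻¹ : H →L[ℂ] H) = 1 := u'.mul_inv
  -- the derivative via calculus rules
  have h1 : HasFDerivAt (fun X : K →L[ℂ] H => 1 + adjoint B ∘L X)
      (compL ℂ K H K (adjoint B)) A :=
    ((compL ℂ K H K (adjoint B)).hasFDerivAt (x := A)).const_add 1
  have hinv0 := hasFDerivAt_ringInverse (𝕜 := ℂ) u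
  rw [hu] at hinv0
  have h2 : HasFDerivAt (fun X : K →L[ℂ] H => Ring.inverse (1 + adjoint B ∘L X))
      ((-mulLeftRight ℂ _ ↑u⁻¹ ↑u⁻¹).comp (compL ℂ K H K (adjoint B))) A :=
    (hinv0.comp A h1 :)
  have hG : HasFDerivAt (fun X : K →L[ℂ] H => Ring.inverse (1 + adjoint B ∘L X) ∘L S)
      (((compL ℂ K K K).flip S).comp
        ((-mulLeftRight ℂ _ ↑u⁻¹ ↑u⁻¹).comp (compL ℂ K H K (adjoint B)))) A :=
    ((((compL ℂ K K K).flip S).hasFDerivAt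
      (x := Ring.inverse (1 + adjoint B ∘L A))).comp A h2 :)
  have hF : HasFDerivAt (fun X : K →L[ℂ] H => C ∘L (B + X))
      ((compL ℂ K H H C).comp (ContinuousLinearMap.id ℂ (K →L[ℂ] H))) A :=
    ((compL ℂ K H H C).hasFDerivAt (x := B + A)).comp A ((hasFDerivAt_id A).const_add B)
  have hmob : mobius B = fun X : K →L[ℂ] H =>
      (C ∘L (B + X)) ∘L (Ring.inverse (1 + adjoint B ∘L X) ∘L S) := by
    funext X; simp [mobius, ← hC, ← hS, comp_assoc]
  have hD := hF.clm_comp hG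
  rw [← hmob] at hD
  refine ⟨_, hD, ?_⟩
  intro V
  -- the key operator identity
  have hBu' : adjoint B ∘L (↑u' : H →L[ℂ] H) = (↑u : K →L[ℂ] K) ∘L adjoint B := by
    rw [hu, hu']; simp [comp_add, add_comp, comp_assoc, one_def]
  have hstep : (1 - (B + A) ∘L ((↑u⁻¹ : K →L[ℂ] K) ∘L adjoint B)) ∘L (↑u' : H →L[ℂ] H)
      = 1 - B ∘L adjoint B := by
    calc (1 - (B + A) ∘L ((↑u⁻¹ : K →L[ℂ] K) ∘L adjoint B)) ∘L (↑u' : H →L[ℂ] H)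
        = ↑u' - (B + A) ∘L ((↑u⁻¹ : K →L[ℂ] K) ∘L (adjoint B ∘L ↑u')) := by
          simp [sub_comp, comp_assoc, one_def]
      _ = ↑u' - (B + A) ∘L (((↑u⁻¹ : K →L[ℂ] K) ∘L ↑u) ∘L adjoint B) := by
          rw [hBu']; simp [comp_assoc]
      _ = ↑u' - (B + A) ∘L adjoint B := by rw [hiu]; simp [one_def]
      _ = 1 - B ∘L adjoint B := by rw [hu']; simp [add_comp, one_def]
  have key0 : (1 : H →L[ℂ] H) - (B + A) ∘L ((↑u⁻¹ : K →L[ℂ] K) ∘L adjoint B)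
      = (1 - B ∘L adjoint B) ∘L (↑u'⁻¹ : H →L[ℂ] H) := by
    have h := congrArg (fun T : H →L[ℂ] H => T ∘L (↑u'⁻¹ : H →L[ℂ] H)) hstep
    simp only [comp_assoc, hui'] at h
    rw [← mul_def, mul_one] at h
    exact h
  have key2 : C - C ∘L ((B + A) ∘L ((↑u⁻¹ : K →L[ℂ] K) ∘L adjoint B))
      = S' ∘L (↑u'⁻¹ : H →L[ℂ] H) := by
    calc C - C ∘L ((B + A) ∘L ((↑u⁻¹ : K →L[ℂ] K) ∘L adjoint B))
        = C ∘L (1 - (B + A) ∘L ((↑u⁻¹ : K →L[ℂ] K) ∘L adjoint B)) := by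
          rw [comp_sub, one_def, comp_id]
      _ = C ∘L ((1 - B ∘L adjoint B) ∘L (↑u'⁻¹ : H →L[ℂ] H)) := by rw [key0]
      _ = (C ∘L (1 - B ∘L adjoint B)) ∘L (↑u'⁻¹ : H →L[ℂ] H) := by rw [comp_assoc]
      _ = S' ∘L (↑u'⁻¹ : H →L[ℂ] H) := by
          rw [hC, hS', opInvSqrt_comp_self B hB]
  -- compute the derivative applied to V
  simp only [ContinuousLinearMap.add_apply, coe_comp', Function.comp_apply, compL_apply,
    flip_apply, ContinuousLinearMap.neg_apply, mulLeftRight_apply, ContinuousLinearMap.coe_id',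
    id_eq, mul_def]
  rw [hri, hri']
  calc C ∘L (B + A) ∘L (-(↑u⁻¹ ∘L (adjoint B ∘L V) ∘L ↑u⁻¹) ∘L S) + (C ∘L V) ∘L (↑u⁻¹ ∘L S)
      = (C - C ∘L ((B + A) ∘L ((↑u⁻¹ : K →L[ℂ] K) ∘L adjoint B))) ∘L (V ∘L (↑u⁻¹ ∘L S)) := by
        simp only [sub_comp, comp_assoc, neg_comp, comp_neg]
        abel
    _ = (S' ∘L (↑u'⁻¹ : H →L[ℂ] H)) ∘L (V ∘L (↑u⁻¹ ∘L S)) := by rw [key2]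
    _ = S' ∘L ↑u'⁻¹ ∘L V ∘L ↑u⁻¹ ∘L S := by simp [comp_assoc]

/-- The Fréchet derivative of M_B at A ∈ 𝓑 is
V ↦ (1-BB*)^{1/2}(1+AB*)^{-1} V (1+B*A)^{-1}(1-B*B)^{1/2}; in particular at A = 0 it is
V ↦ (1-BB*)^{1/2} V (1-B*B)^{1/2}. -/
theorem mobius_hasFDerivAt (B A : K →L[ℂ] H) (hB : ‖B‖ < 1) (hA : ‖A‖ < 1) :
    (∃ D : (K →L[ℂ] H) →L[ℂ] (K →L[ℂ] H), HasFDerivAt (mobius B) D A ∧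
      ∀ V : K →L[ℂ] H, D V =
        opSqrt (1 - B ∘L adjoint B) ∘L Ring.inverse (1 + A ∘L adjoint B) ∘L V ∘L
          Ring.inverse (1 + adjoint B ∘L A) ∘L opSqrt (1 - adjoint B ∘L B)) ∧
    (∃ D₀ : (K →L[ℂ] H) →L[ℂ] (K →L[ℂ] H), HasFDerivAt (mobius B) D₀ 0 ∧
      ∀ V : K →L[ℂ] H, D₀ V =
        opSqrt (1 - B ∘L adjoint B) ∘L V ∘L opSqrt (1 - adjoint B ∘L B)) := by
  refine ⟨mobius_deriv_aux B A hB hA, ?_⟩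
  obtain ⟨D₀, hD₀, hD₀V⟩ := mobius_deriv_aux B 0 hB (by simp)
  refine ⟨D₀, hD₀, fun V => ?_⟩
  rw [hD₀V V]
  simp only [ContinuousLinearMap.comp_zero, ContinuousLinearMap.zero_comp, add_zero,
    Ring.inverse_one]
  rw [show ((1 : H →L[ℂ] H)) = ContinuousLinearMap.id ℂ H from rfl,
    show ((1 : K →L[ℂ] K)) = ContinuousLinearMap.id ℂ K from rfl]
  rw [ContinuousLinearMap.id_comp, ContinuousLinearMap.id_comp]
end

section
/- Every Möbius transformation M_A on the open unit ball B of L(K,H) is Lipschitz: for all X, Y ∈ B, ‖M_A(X) - M_A(Y)‖ ≤ 3D^{5/2}‖X - Y‖, where D = (1 - ‖A‖)^{-1}. -/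
open ContinuousLinearMap
open scoped Pointwise

variable {K H : Type*}
  [NormedAddCommGroup H] [InnerProductSpace ℂ H] [CompleteSpace H]
  [NormedAddCommGroup K] [InnerProductSpace ℂ K] [CompleteSpace K]

/-- Norm bound for inverse of a small perturbation of the identity. -/
lemma aux_inverse_norm {E : Type*} [NormedAddCommGroup E] [InnerProductSpace ℂ E]
    [CompleteSpace E] (t : E →L[ℂ] E) (h : ‖t‖ < 1) :
    ‖Ring.inverse (1 - t)‖ ≤ (1 - ‖t‖)⁻¹ := by
  rw [NormedRing.inverse_one_sub t h]
  have h1 : ‖(1 : E →L[ℂ] E)‖ ≤ 1 := norm_id_le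
  have h2 := tsum_geometric_le_of_norm_lt_one t h
  calc ‖((Units.oneSub t h)⁻¹ : (E →L[ℂ] E)ˣ).val‖ = ‖∑' n : ℕ, t ^ n‖ := rfl
    _ ≤ ‖(1 : E →L[ℂ] E)‖ - 1 + (1 - ‖t‖)⁻¹ := h2
    _ ≤ (1 - ‖t‖)⁻¹ := by linarith

lemma aux_mem_of_one_sub {E : Type*} [NormedAddCommGroup E] [InnerProductSpace ℂ E]
    [CompleteSpace E] (a : E →L[ℂ] E) {x : ℝ} (hx : x ∈ spectrum ℝ (1 - a)) :
    (1 - x) ∈ spectrum ℝ a := by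
  have h : spectrum ℝ (1 - a) = ({(1 : ℝ)} : Set ℝ) - spectrum ℝ a := by
    rw [spectrum.singleton_sub_eq, map_one]
  rw [h, Set.mem_sub] at hx
  obtain ⟨i, hi, j, hj, rfl⟩ := hx
  simp_all

set_option maxHeartbeats 1000000 in
/-- Each Möbius transformation M_A is Lipschitz on the ball, with constant 3D^{5/2},
D = (1-‖A‖)⁻¹. -/
theorem mobius_lipschitz (A : K →L[ℂ] H) (hA : ‖A‖ < 1) (X Y : K →L[ℂ] H)
    (hX : ‖X‖ < 1) (hY : ‖Y‖ < 1) :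
    ‖mobius A X - mobius A Y‖ ≤ 3 * ((1 - ‖A‖)⁻¹) ^ ((5 : ℝ) / 2) * ‖X - Y‖ := by
  have hA0 : (0 : ℝ) ≤ ‖A‖ := norm_nonneg A
  have hApos : (0 : ℝ) < 1 - ‖A‖ := by linarith
  set D : ℝ := (1 - ‖A‖)⁻¹ with hDdef
  have hDpos : 0 < D := inv_pos.mpr hApos
  have hD1 : 1 ≤ D := by
    rw [hDdef, le_inv_comm₀ one_pos hApos]; · linarith
  -- trivial case
  rcases subsingleton_or_nontrivial (K →L[ℂ] H) with hss | hnt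
  · rw [Subsingleton.elim (mobius A X) (mobius A Y), sub_self, norm_zero]
    have : (0:ℝ) ≤ D ^ ((5:ℝ)/2) := Real.rpow_nonneg hDpos.le _
    positivity
  have hKnt : Nontrivial K ∧ Nontrivial H := by
    obtain ⟨f, hf⟩ := exists_ne (0 : K →L[ℂ] H)
    have : ∃ x : K, f x ≠ 0 := by
      by_contra hc
      push_neg at hc
      exact hf (by ext x; simpa using hc x)
    obtain ⟨x, hx⟩ := this
    have hx0 : x ≠ 0 := fun h => hx (by simp [h])
    exact ⟨⟨x, 0, hx0⟩, ⟨f x, 0, hx⟩⟩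
  obtain ⟨hKnt, hHnt⟩ := hKnt
  -- abbreviations
  set a : K →L[ℂ] K := adjoint A ∘L X with hadef
  set b : K →L[ℂ] K := adjoint A ∘L Y with hbdef
  set u : K →L[ℂ] K := Ring.inverse (1 + a) with hudef
  set v : K →L[ℂ] K := Ring.inverse (1 + b) with hvdef
  set L : H →L[ℂ] H := opInvSqrt (1 - A ∘L adjoint A) with hLdef
  set R : K →L[ℂ] K := opSqrt (1 - adjoint A ∘L A) with hRdef
  have hadjnorm : ‖(adjoint A : H →L[ℂ] K)‖ = ‖A‖ := adjoint.norm_map A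
  have hanorm : ‖a‖ ≤ ‖A‖ := by
    calc ‖a‖ ≤ ‖(adjoint A : H →L[ℂ] K)‖ * ‖X‖ := opNorm_comp_le _ _
      _ ≤ ‖A‖ * 1 := by rw [hadjnorm]; exact mul_le_mul_of_nonneg_left hX.le hA0
      _ = ‖A‖ := mul_one _
  have hbnorm : ‖b‖ ≤ ‖A‖ := by
    calc ‖b‖ ≤ ‖(adjoint A : H →L[ℂ] K)‖ * ‖Y‖ := opNorm_comp_le _ _
      _ ≤ ‖A‖ * 1 := by rw [hadjnorm]; exact mul_le_mul_of_nonneg_left hY.le hA0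
      _ = ‖A‖ := mul_one _
  have haneg : ‖-a‖ < 1 := by rw [norm_neg]; exact lt_of_le_of_lt hanorm hA
  have hbneg : ‖-b‖ < 1 := by rw [norm_neg]; exact lt_of_le_of_lt hbnorm hA
  have haU : IsUnit (1 + a) := by
    have := isUnit_one_sub_of_norm_lt_one haneg
    rwa [sub_neg_eq_add] at this
  have hbU : IsUnit (1 + b) := by
    have := isUnit_one_sub_of_norm_lt_one hbneg
    rwa [sub_neg_eq_add] at this
  -- norm bounds on u, v
  have hinv : ∀ (c : K →L[ℂ] K), ‖c‖ ≤ ‖A‖ → ‖Ring.inverse (1 + c)‖ ≤ D := by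
    intro c hc
    have hc1 : ‖-c‖ < 1 := by rw [norm_neg]; exact lt_of_le_of_lt hc hA
    have := aux_inverse_norm (-c) hc1
    rw [sub_neg_eq_add, norm_neg] at this
    refine this.trans ?_
    rw [hDdef]
    gcongr
  have hu : ‖u‖ ≤ D := hinv a hanorm
  have hv : ‖v‖ ≤ D := hinv b hbnorm
  -- norm bound on R
  have hAAnonneg : (0 : K →L[ℂ] K) ≤ adjoint A ∘L A := by
    rw [nonneg_iff_isPositive]
    simpa [ContinuousLinearMap.one_def] using (isPositive_one (E := H)).adjoint_conj A
  have hAAnonneg' : (0 : H →L[ℂ] H) ≤ A ∘L adjoint A := by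
    rw [nonneg_iff_isPositive]
    simpa [ContinuousLinearMap.one_def] using (isPositive_one (E := K)).conj_adjoint A
  have hR : ‖R‖ ≤ 1 := by
    rw [hRdef, opSqrt]
    refine norm_cfc_le zero_le_one fun x hx => ?_
    have h1 := aux_mem_of_one_sub _ hx
    have h2 : 0 ≤ 1 - x := spectrum_nonneg_of_nonneg hAAnonneg h1
    rw [Real.norm_of_nonneg (Real.sqrt_nonneg x)]
    exact Real.sqrt_le_one.mpr (by linarith)
  -- norm bound on L
  have hL : ‖L‖ ≤ Real.sqrt D := by
    rw [hLdef, opInvSqrt]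
    refine norm_cfc_le (Real.sqrt_nonneg D) fun x hx => ?_
    have h1 := aux_mem_of_one_sub _ hx
    have h2 : 0 ≤ 1 - x := spectrum_nonneg_of_nonneg hAAnonneg' h1
    have h3 : ‖(1 : ℝ) - x‖ ≤ ‖A ∘L adjoint A‖ := spectrum.norm_le_norm_of_mem h1
    have h4 : ‖A ∘L adjoint A‖ ≤ ‖A‖ := by
      calc ‖A ∘L adjoint A‖ ≤ ‖A‖ * ‖(adjoint A : H →L[ℂ] K)‖ := opNorm_comp_le _ _
        _ = ‖A‖ * ‖A‖ := by rw [hadjnorm]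
        _ ≤ ‖A‖ * 1 := mul_le_mul_of_nonneg_left hA.le hA0
        _ = ‖A‖ := mul_one _
    rw [Real.norm_of_nonneg h2] at h3
    have hx5 : 1 - ‖A‖ ≤ x := by linarith [h3.trans h4]
    have hxpos : 0 < x := lt_of_lt_of_le hApos hx5
    rw [Real.norm_of_nonneg (inv_nonneg.mpr (Real.sqrt_nonneg x))]
    rw [hDdef, Real.sqrt_inv]
    gcongr
  -- the algebraic identity
  have hmu : (1 + a) * u = 1 := Ring.mul_inverse_cancel _ haU
  have hvm : v * (1 + b) = 1 := Ring.inverse_mul_cancel _ hbU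
  have huv : u - v = v * (b - a) * u := by
    calc u - v = (v * (1 + b)) * u - v * ((1 + a) * u) := by rw [hvm, hmu, one_mul, mul_one]
      _ = v * (b - a) * u := by noncomm_ring
  set M : K →L[ℂ] H := (A + X) ∘L u - (A + Y) ∘L v with hMdef
  have hdiff : mobius A X - mobius A Y = L ∘L (M ∘L R) := by
    rw [hMdef]
    simp only [mobius, ← hadef, ← hbdef, ← hudef, ← hvdef, ← hLdef, ← hRdef,
      comp_sub, sub_comp, comp_assoc]
  have hM : M = (X - Y) ∘L u + (A + Y) ∘L (v * (b - a) * u) := by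
    rw [hMdef, ← huv]
    have hAX : A + X = (A + Y) + (X - Y) := by abel
    rw [hAX, add_comp, comp_sub]
    abel
  -- norm estimates
  have hAY : ‖A + Y‖ ≤ 2 := by
    calc ‖A + Y‖ ≤ ‖A‖ + ‖Y‖ := norm_add_le _ _
      _ ≤ 2 := by linarith
  have hba : ‖b - a‖ ≤ ‖A‖ * ‖X - Y‖ := by
    have : b - a = adjoint A ∘L (Y - X) := by rw [hadef, hbdef, comp_sub]
    rw [this]
    calc ‖(adjoint A : H →L[ℂ] K) ∘L (Y - X)‖ ≤ ‖(adjoint A : H →L[ℂ] K)‖ * ‖Y - X‖ :=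
          opNorm_comp_le _ _
      _ = ‖A‖ * ‖X - Y‖ := by rw [hadjnorm, norm_sub_rev]
  have hMnorm : ‖M‖ ≤ D * ‖X - Y‖ + 2 * (D * (‖A‖ * ‖X - Y‖) * D) := by
    rw [hM]
    have e1 : ‖(X - Y) ∘L u‖ ≤ ‖X - Y‖ * D := by
      calc ‖(X - Y) ∘L u‖ ≤ ‖X - Y‖ * ‖u‖ := opNorm_comp_le _ _
        _ ≤ ‖X - Y‖ * D := mul_le_mul_of_nonneg_left hu (norm_nonneg _)
    have e2 : ‖(A + Y) ∘L (v * (b - a) * u)‖ ≤ 2 * (D * (‖A‖ * ‖X - Y‖) * D) := by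
      calc ‖(A + Y) ∘L (v * (b - a) * u)‖ ≤ ‖A + Y‖ * ‖v * (b - a) * u‖ := opNorm_comp_le _ _
        _ ≤ 2 * (D * (‖A‖ * ‖X - Y‖) * D) := by
            refine mul_le_mul hAY ?_ (norm_nonneg _) (by norm_num)
            calc ‖v * (b - a) * u‖ ≤ ‖v * (b - a)‖ * ‖u‖ := norm_mul_le _ _
              _ ≤ ‖v‖ * ‖b - a‖ * ‖u‖ :=
                  mul_le_mul_of_nonneg_right (norm_mul_le _ _) (norm_nonneg _)
              _ ≤ D * (‖A‖ * ‖X - Y‖) * D := by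
                  have h1 : ‖v‖ * ‖b - a‖ ≤ D * (‖A‖ * ‖X - Y‖) :=
                    mul_le_mul hv hba (norm_nonneg _) hDpos.le
                  exact mul_le_mul h1 hu (norm_nonneg _) (by positivity)
    calc ‖(X - Y) ∘L u + (A + Y) ∘L (v * (b - a) * u)‖
        ≤ ‖(X - Y) ∘L u‖ + ‖(A + Y) ∘L (v * (b - a) * u)‖ := norm_add_le _ _
      _ ≤ D * ‖X - Y‖ + 2 * (D * (‖A‖ * ‖X - Y‖) * D) := by
          rw [mul_comm D ‖X - Y‖] at *
          exact add_le_add e1 e2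
  -- assemble
  have hrpow : D ^ ((5:ℝ)/2) = Real.sqrt D * D ^ 2 := by
    rw [Real.sqrt_eq_rpow, ← Real.rpow_natCast D 2, ← Real.rpow_add hDpos]
    norm_num
  have hXY0 : (0:ℝ) ≤ ‖X - Y‖ := norm_nonneg _
  have hsq : (0:ℝ) ≤ Real.sqrt D := Real.sqrt_nonneg D
  calc ‖mobius A X - mobius A Y‖ = ‖L ∘L (M ∘L R)‖ := by rw [hdiff]
    _ ≤ ‖L‖ * ‖M ∘L R‖ := opNorm_comp_le _ _
    _ ≤ ‖L‖ * (‖M‖ * ‖R‖) :=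
        mul_le_mul_of_nonneg_left (opNorm_comp_le _ _) (norm_nonneg _)
    _ ≤ Real.sqrt D * ((D * ‖X - Y‖ + 2 * (D * (‖A‖ * ‖X - Y‖) * D)) * 1) := by
        refine mul_le_mul hL ?_ (by positivity) hsq
        refine mul_le_mul hMnorm hR (norm_nonneg _) ?_
        positivity
    _ ≤ 3 * D ^ ((5:ℝ)/2) * ‖X - Y‖ := by
        rw [hrpow, mul_one]
        have key : D * ‖X - Y‖ + 2 * (D * (‖A‖ * ‖X - Y‖) * D) ≤ 3 * D ^ 2 * ‖X - Y‖ := by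
          have h1 : D ≤ D ^ 2 := le_self_pow₀ hD1 two_ne_zero
          have t1 : D * ‖X - Y‖ ≤ D ^ 2 * ‖X - Y‖ := mul_le_mul_of_nonneg_right h1 hXY0
          have t2 : ‖A‖ * ‖X - Y‖ ≤ ‖X - Y‖ := by
            have := mul_le_mul_of_nonneg_right hA.le hXY0
            linarith
          have t3 : D * (‖A‖ * ‖X - Y‖) * D ≤ D ^ 2 * ‖X - Y‖ := by
            have h4 : D * (‖A‖ * ‖X - Y‖) * D = D ^ 2 * (‖A‖ * ‖X - Y‖) := by ring
            rw [h4]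
            exact mul_le_mul_of_nonneg_left t2 (by positivity)
          linarith
        calc Real.sqrt D * (D * ‖X - Y‖ + 2 * (D * (‖A‖ * ‖X - Y‖) * D))
            ≤ Real.sqrt D * (3 * D ^ 2 * ‖X - Y‖) := mul_le_mul_of_nonneg_left key hsq
          _ = 3 * (Real.sqrt D * D ^ 2) * ‖X - Y‖ := by ring
end

section
/- For any operators A, B in the open unit ball B of L(K,H): ‖A‖ ≤ ‖(1-BB*)^{-1/2}(A - BA*B)(1-B*B)^{-1/2}‖. -/
open ContinuousLinearMap

variable {K H : Type*}
  [NormedAddCommGroup H] [InnerProductSpace ℂ H] [CompleteSpace H]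
  [NormedAddCommGroup K] [InnerProductSpace ℂ K] [CompleteSpace K]

section Aux

open scoped InnerProductSpace

variable {E : Type*} [NormedAddCommGroup E] [InnerProductSpace ℂ E] [CompleteSpace E]

lemma opSqrt_mul_opInvSqrt (T : E →L[ℂ] E) (hT : IsSelfAdjoint T) {c : ℝ} (hc : 0 < c)
    (hs : ∀ x ∈ spectrum ℝ T, c ≤ x) : opSqrt T ∘L opInvSqrt T = 1 := by
  rw [← mul_def]
  have hinv : ContinuousOn (fun x : ℝ => (Real.sqrt x)⁻¹) (spectrum ℝ T) :=
    Real.continuous_sqrt.continuousOn.inv₀ fun x hx =>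
      ne_of_gt (Real.sqrt_pos.2 (lt_of_lt_of_le hc (hs x hx)))
  rw [opSqrt, opInvSqrt, ← cfc_mul _ _ T Real.continuous_sqrt.continuousOn hinv]
  rw [← cfc_one (R := ℝ) T]
  apply cfc_congr
  intro x hx
  have : (0:ℝ) < Real.sqrt x := Real.sqrt_pos.2 (lt_of_lt_of_le hc (hs x hx))
  field_simp
  rfl

lemma opInvSqrt_mul_opSqrt (T : E →L[ℂ] E) (hT : IsSelfAdjoint T) {c : ℝ} (hc : 0 < c)
    (hs : ∀ x ∈ spectrum ℝ T, c ≤ x) : opInvSqrt T ∘L opSqrt T = 1 := by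
  rw [← mul_def]
  have hinv : ContinuousOn (fun x : ℝ => (Real.sqrt x)⁻¹) (spectrum ℝ T) :=
    Real.continuous_sqrt.continuousOn.inv₀ fun x hx =>
      ne_of_gt (Real.sqrt_pos.2 (lt_of_lt_of_le hc (hs x hx)))
  rw [opSqrt, opInvSqrt, ← cfc_mul _ _ T hinv Real.continuous_sqrt.continuousOn]
  rw [← cfc_one (R := ℝ) T]
  apply cfc_congr
  intro x hx
  have : (0:ℝ) < Real.sqrt x := Real.sqrt_pos.2 (lt_of_lt_of_le hc (hs x hx))
  field_simp
  rfl

lemma opSqrt_mul_self (T : E →L[ℂ] E) (hT : IsSelfAdjoint T)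
    (hs : ∀ x ∈ spectrum ℝ T, 0 ≤ x) : opSqrt T ∘L opSqrt T = T := by
  rw [← mul_def]
  rw [opSqrt, ← cfc_mul _ _ T Real.continuous_sqrt.continuousOn
    Real.continuous_sqrt.continuousOn]
  conv_rhs => rw [← cfc_id (R := ℝ) T]
  exact cfc_congr fun x hx => Real.mul_self_sqrt (hs x hx)

lemma isSelfAdjoint_opSqrt (T : E →L[ℂ] E) : IsSelfAdjoint (opSqrt T) :=
  cfc_predicate _ _

variable {F : Type*} [NormedAddCommGroup F] [InnerProductSpace ℂ F] [CompleteSpace F]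

lemma isSelfAdjoint_one_sub_comp_adjoint (C : F →L[ℂ] E) :
    IsSelfAdjoint (1 - C ∘L adjoint C) := by
  rw [IsSelfAdjoint, star_sub, star_one]
  congr 1
  rw [star_eq_adjoint, adjoint_comp, adjoint_adjoint]

lemma spectrum_one_sub_comp_adjoint_lb [Nontrivial E] (C : F →L[ℂ] E) (x : ℝ)
    (hx : x ∈ spectrum ℝ (1 - C ∘L adjoint C)) : 1 - ‖C‖^2 ≤ x := by
  have h1 : (1 : E →L[ℂ] E) - C ∘L adjoint C
      = algebraMap ℝ _ (1:ℝ) - C ∘L adjoint C := by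
    rw [map_one]
  rw [h1, ← spectrum.singleton_sub_eq] at hx
  obtain ⟨u, hu, v, hv, huv⟩ := hx
  simp only [Set.mem_singleton_iff] at hu
  simp only [] at huv
  have hvn : |v| ≤ ‖C ∘L adjoint C‖ := by
    simpa using spectrum.norm_le_norm_of_mem hv
  have h2 : ‖C ∘L adjoint C‖ ≤ ‖C‖^2 := by
    calc ‖C ∘L adjoint C‖ ≤ ‖C‖ * ‖adjoint C‖ := opNorm_comp_le _ _
    _ = ‖C‖^2 := by rw [adjoint.norm_map C]; ring
  have := abs_le.1 (hvn.trans h2)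
  subst hu huv; linarith [this.2]

lemma norm_sq_opSqrt_apply [Nontrivial E] (C : F →L[ℂ] E) (hC : ‖C‖ < 1) (h : E) :
    ‖opSqrt (1 - C ∘L adjoint C) h‖^2 = ‖h‖^2 - ‖adjoint C h‖^2 := by
  set X := 1 - C ∘L adjoint C with hXdef
  have hX : IsSelfAdjoint X := isSelfAdjoint_one_sub_comp_adjoint C
  have hS : IsSelfAdjoint (opSqrt X) := isSelfAdjoint_opSqrt X
  have hs : ∀ x ∈ spectrum ℝ X, 0 ≤ x := by
    intro x hx
    have := spectrum_one_sub_comp_adjoint_lb C x hx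
    nlinarith [norm_nonneg C]
  have hSS : opSqrt X ∘L opSqrt X = X := opSqrt_mul_self X hX hs
  have key : (⟪opSqrt X h, opSqrt X h⟫_ℂ) = ⟪h, h⟫_ℂ - ⟪adjoint C h, adjoint C h⟫_ℂ := by
    conv_lhs => rw [← hS.adjoint_eq]
    rw [adjoint_inner_left, hS.adjoint_eq]
    have hXh : opSqrt X (opSqrt X h) = h - C (adjoint C h) := by
      have := congrArg (fun (M : E →L[ℂ] E) => M h) hSS
      simpa [hXdef] using this
    rw [hXh, inner_sub_right, ← adjoint_inner_left C]
  rw [inner_self_eq_norm_sq_to_K, inner_self_eq_norm_sq_to_K,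
    inner_self_eq_norm_sq_to_K] at key
  exact_mod_cast key

lemma key_real_ineq {M N r a b : ℝ} (hN : 0 ≤ N) (hNM : N ≤ M) (ha : 0 ≤ a) (hb : 0 ≤ b)
    (har : a ≤ r) (hbr : b ≤ r) (hr1 : r < 1) :
    N * (Real.sqrt (1 - a^2) * Real.sqrt (1 - b^2)) + M * (a * b)
      ≤ M - (M - N) * (1 - r^2) := by
  have hr0 : 0 ≤ r := le_trans ha har
  set sa := Real.sqrt (1 - a^2) with hsa
  set sb := Real.sqrt (1 - b^2) with hsb
  set sr := Real.sqrt (1 - r^2) with hsr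
  have ha1 : a ≤ 1 := le_of_lt (lt_of_le_of_lt har hr1)
  have hb1 : b ≤ 1 := le_of_lt (lt_of_le_of_lt hbr hr1)
  have h1 : sa^2 = 1 - a^2 := Real.sq_sqrt (by nlinarith)
  have h2 : sb^2 = 1 - b^2 := Real.sq_sqrt (by nlinarith)
  have h3 : sr^2 = 1 - r^2 := Real.sq_sqrt (by nlinarith)
  have hsa0 : 0 ≤ sa := Real.sqrt_nonneg _
  have hsb0 : 0 ≤ sb := Real.sqrt_nonneg _
  have hsr0 : 0 ≤ sr := Real.sqrt_nonneg _
  have hra : sr ≤ sa := Real.sqrt_le_sqrt (by nlinarith)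
  have hrb : sr ≤ sb := Real.sqrt_le_sqrt (by nlinarith)
  have hc1 : sa * sb + a * b ≤ 1 := by nlinarith [sq_nonneg (sa - sb), sq_nonneg (a - b)]
  have hc2 : 1 - r^2 ≤ sa * sb := by nlinarith [mul_le_mul hra hrb hsr0 hsa0]
  nlinarith [mul_le_mul_of_nonneg_left hc1 (le_trans hN hNM),
    mul_le_mul_of_nonneg_left hc2 (by linarith : (0:ℝ) ≤ M - N)]

end Aux

open scoped InnerProductSpace

set_option maxHeartbeats 1000000 in
/-- For A, B in the open unit ball of L(K,H):
‖A‖ ≤ ‖(1-BB*)^{-1/2}(A - BA*B)(1-B*B)^{-1/2}‖. -/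
theorem norm_le_norm_conjugated (A B : K →L[ℂ] H) (hA : ‖A‖ < 1) (hB : ‖B‖ < 1) :
    ‖A‖ ≤ ‖opInvSqrt (1 - B ∘L adjoint B) ∘L (A - B ∘L adjoint A ∘L B) ∘L
      opInvSqrt (1 - adjoint B ∘L B)‖ := by
  rcases subsingleton_or_nontrivial H with hH | hH
  · have hA0 : A = 0 := by ext k; exact Subsingleton.elim _ _
    rw [hA0]; simpa using norm_nonneg _
  rcases subsingleton_or_nontrivial K with hK | hK
  · have hA0 : A = 0 := by ext k; rw [Subsingleton.elim k 0]; simp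
    rw [hA0]; simpa using norm_nonneg _
  set M := A - B ∘L adjoint A ∘L B with hMdef
  set X := 1 - B ∘L adjoint B with hXdef
  set Y := 1 - adjoint B ∘L B with hYdef
  set T := opInvSqrt X ∘L M ∘L opInvSqrt Y with hTdef
  have hYeq : Y = 1 - adjoint B ∘L adjoint (adjoint B) := by rw [adjoint_adjoint]
  have hX : IsSelfAdjoint X := isSelfAdjoint_one_sub_comp_adjoint B
  have hY : IsSelfAdjoint Y := hYeq ▸ isSelfAdjoint_one_sub_comp_adjoint (adjoint B)
  have hc : (0:ℝ) < 1 - ‖B‖^2 := by nlinarith [norm_nonneg B]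
  have hsX : ∀ x ∈ spectrum ℝ X, 1 - ‖B‖^2 ≤ x :=
    fun x hx => spectrum_one_sub_comp_adjoint_lb B x hx
  have hsY : ∀ x ∈ spectrum ℝ Y, 1 - ‖B‖^2 ≤ x := by
    intro x hx
    have := spectrum_one_sub_comp_adjoint_lb (adjoint B) x (hYeq ▸ hx)
    rwa [adjoint.norm_map B] at this
  have h1 : opSqrt X ∘L opInvSqrt X = 1 := opSqrt_mul_opInvSqrt X hX hc hsX
  have h2 : opInvSqrt Y ∘L opSqrt Y = 1 := opInvSqrt_mul_opSqrt Y hY hc hsY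
  -- the key identity
  have hid : opSqrt X ∘L (T ∘L opSqrt Y) = M := by
    rw [hTdef, comp_assoc, comp_assoc, h2]
    rw [show ((M.comp (1 : K →L[ℂ] K)) = M) from comp_id M]
    rw [← comp_assoc, h1, show ((1 : H →L[ℂ] H).comp M = M) from id_comp M]
  by_cases hle : ‖A‖ ≤ ‖T‖
  · exact hle
  push_neg at hle
  have hNM : ‖T‖ ≤ ‖A‖ := le_of_lt hle
  set C := ‖A‖ - (‖A‖ - ‖T‖) * (1 - ‖B‖^2) with hCdef
  have hC0 : 0 ≤ C := by nlinarith [norm_nonneg T, norm_nonneg A, sq_nonneg ‖B‖]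
  have hunit : ∀ k : K, ‖k‖ = 1 → ‖A k‖ ≤ C := by
    intro k hk
    by_cases hAk : A k = 0
    · rw [hAk, norm_zero]; exact hC0
    have hAkn : ‖A k‖ ≠ 0 := norm_ne_zero_iff.2 hAk
    set h : H := ((‖A k‖ : ℂ))⁻¹ • A k with hhdef
    have hh : ‖h‖ = 1 := norm_smul_inv_norm (𝕜 := ℂ) hAk
    have hinner : (⟪h, A k⟫_ℂ) = (‖A k‖ : ℂ) := by
      rw [hhdef, inner_smul_left, inner_self_eq_norm_sq_to_K]
      have hne : (‖A k‖ : ℂ) ≠ 0 := by exact_mod_cast hAkn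
      simp only [map_inv₀, Complex.conj_ofReal]
      field_simp
      ring_nf
      rfl
    have hdec : (⟪h, A k⟫_ℂ)
        = ⟪opSqrt X h, T (opSqrt Y k)⟫_ℂ + ⟪A (adjoint B h), B k⟫_ℂ := by
      have hA' : A = opSqrt X ∘L (T ∘L opSqrt Y) + B ∘L adjoint A ∘L B := by
        rw [hid, hMdef]; abel
      conv_lhs => rw [hA']
      rw [add_apply, inner_add_right]
      congr 1
      · rw [show (opSqrt X ∘L (T ∘L opSqrt Y)) k = opSqrt X (T (opSqrt Y k)) by rfl]
        conv_rhs => rw [← (isSelfAdjoint_opSqrt X).adjoint_eq]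
        rw [adjoint_inner_left]
      · rw [show (B ∘L adjoint A ∘L B) k = B (adjoint A (B k)) by rfl]
        rw [← adjoint_inner_left B, adjoint_inner_right A]
    set a := ‖adjoint B h‖ with hadef
    set b := ‖B k‖ with hbdef
    have haB : a ≤ ‖B‖ := by
      calc a ≤ ‖adjoint B‖ * ‖h‖ := le_opNorm _ _
      _ = ‖B‖ := by rw [adjoint.norm_map B, hh, mul_one]
    have hbB : b ≤ ‖B‖ := by
      calc b ≤ ‖B‖ * ‖k‖ := le_opNorm _ _
      _ = ‖B‖ := by rw [hk, mul_one]
    have hSh : ‖opSqrt X h‖ = Real.sqrt (1 - a^2) := by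
      rw [← Real.sqrt_sq (norm_nonneg (opSqrt X h))]
      congr 1
      rw [hXdef, norm_sq_opSqrt_apply B hB h, hh]; ring
    have hS'k : ‖opSqrt Y k‖ = Real.sqrt (1 - b^2) := by
      rw [← Real.sqrt_sq (norm_nonneg (opSqrt Y k))]
      congr 1
      have hB' : ‖adjoint B‖ < 1 := by rwa [adjoint.norm_map B]
      have h5 := norm_sq_opSqrt_apply (adjoint B) hB' k
      rw [← hYeq] at h5
      rw [h5, adjoint_adjoint, hk]; ring
    have hbound : ‖A k‖ ≤ ‖T‖ * (Real.sqrt (1 - a^2) * Real.sqrt (1 - b^2))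
        + ‖A‖ * (a * b) := by
      have h0 : ‖A k‖ = ‖(⟪h, A k⟫_ℂ)‖ := by rw [hinner]; simp
      rw [h0, hdec]
      calc ‖⟪opSqrt X h, T (opSqrt Y k)⟫_ℂ + ⟪A (adjoint B h), B k⟫_ℂ‖
          ≤ ‖⟪opSqrt X h, T (opSqrt Y k)⟫_ℂ‖ + ‖⟪A (adjoint B h), B k⟫_ℂ‖ :=
            norm_add_le _ _
        _ ≤ ‖opSqrt X h‖ * ‖T (opSqrt Y k)‖ + ‖A (adjoint B h)‖ * ‖B k‖ := by
            gcongr <;> exact norm_inner_le_norm _ _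
        _ ≤ ‖opSqrt X h‖ * (‖T‖ * ‖opSqrt Y k‖) + (‖A‖ * ‖adjoint B h‖) * ‖B k‖ := by
            gcongr
            · exact le_opNorm _ _
            · exact le_opNorm _ _
        _ = ‖T‖ * (‖opSqrt X h‖ * ‖opSqrt Y k‖) + ‖A‖ * (a * b) := by ring
        _ = ‖T‖ * (Real.sqrt (1 - a^2) * Real.sqrt (1 - b^2)) + ‖A‖ * (a * b) := by
            rw [hSh, hS'k]
    refine hbound.trans ?_
    exact key_real_ineq (norm_nonneg T) hNM (norm_nonneg _) (norm_nonneg _) haB hbB hB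
  have hAC : ‖A‖ ≤ C := by
    apply A.opNorm_le_bound' hC0
    intro k hkne
    have hk0 : k ≠ 0 := fun hk => hkne (by simp [hk])
    set u := ((‖k‖ : ℂ))⁻¹ • k with hudef
    have hu : ‖u‖ = 1 := norm_smul_inv_norm (𝕜 := ℂ) hk0
    have h6 := hunit u hu
    rw [hudef, map_smul, norm_smul] at h6
    have hknn : (0:ℝ) < ‖k‖ := norm_pos_iff.2 hk0
    simp only [norm_inv, Complex.norm_real, Real.norm_eq_abs,
      abs_of_nonneg (norm_nonneg k)] at h6
    calc ‖A k‖ = ‖k‖ * (‖k‖⁻¹ * ‖A k‖) := by field_simp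
    _ ≤ ‖k‖ * C := mul_le_mul_of_nonneg_left h6 (le_of_lt hknn)
    _ = C * ‖k‖ := mul_comm _ _
  nlinarith
end
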